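/- arXiv:2507.11509 — 2 statements merged into one kernel-verified Lean document; each statement's English description precedes it below -/
import Mathlib

section
/- Let Σ be a finite set, let H be a finite index set, and let c : Σ → H → ℝ be any function. For every probability distribution μ on Σ there exists a probability distribution μ' on Σ whose support has cardinality at most |H| + 1 such that for every h ∈ H, ∑_{σ ∈ Σ} μ(σ)·c(σ,h) = ∑_{σ ∈ Σ} μ'(σ)·c(σ,h). -/
open Classical in
/-- Small-support lemma (Carathéodory): any distribution can be replaced by one with
support of size at most |H| + 1 preserving all the linear statistics `c · h`. -/
theorem small_support_preserving_statistics
    {S H : Type} [Fintype S] [Fintype H] (c : S → H → ℝ)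
    (μ : S → ℝ) (hμ0 : ∀ s, 0 ≤ μ s) (hμ1 : ∑ s, μ s = 1) :
    ∃ μ' : S → ℝ, (∀ s, 0 ≤ μ' s) ∧ (∑ s, μ' s = 1) ∧
      (Finset.univ.filter (fun s => μ' s ≠ 0)).card ≤ Fintype.card H + 1 ∧
      ∀ h : H, ∑ s, μ s * c s h = ∑ s, μ' s * c s h := by
  set v : H → ℝ := ∑ s, μ s • c s with hv
  have hvmem : v ∈ convexHull ℝ (Set.range c) := by
    have := Finset.centerMass_mem_convexHull (Finset.univ : Finset S)
      (fun s _ => hμ0 s) (by rw [hμ1]; norm_num)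
      (fun s _ => Set.mem_range_self (f := c) s)
    rwa [Finset.centerMass_eq_of_sum_1 _ _ hμ1] at this
  obtain ⟨ι, hι, z, w, hzran, hai, hw0, hw1, hwz⟩ :=
    eq_pos_convex_span_of_mem_convexHull hvmem
  -- card bound
  have hcard : Fintype.card ι ≤ Fintype.card H + 1 := by
    have h1 := hai.card_le_finrank_succ
    have h2 : Module.finrank ℝ ↥(vectorSpan ℝ (Set.range z)) ≤ Fintype.card H :=
      (Submodule.finrank_le _).trans_eq (Module.finrank_fintype_fun_eq_card ℝ)
    omega
  -- choose preimages
  have hpre : ∀ i : ι, ∃ s : S, c s = z i := fun i => hzran (Set.mem_range_self i)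
  choose g hg using hpre
  have hginj : Function.Injective g := by
    intro i j hij
    apply hai.injective
    rw [← hg i, ← hg j, hij]
  set μ' : S → ℝ := fun s => ∑ i : ι, if g i = s then w i else 0 with hμ'
  refine ⟨μ', fun s => Finset.sum_nonneg fun i _ => ?_, ?_, ?_, ?_⟩
  · split <;> [exact (hw0 i).le; rfl]
  · rw [Finset.sum_comm]
    simpa using hw1
  · have hsub : (Finset.univ.filter (fun s => μ' s ≠ 0)) ⊆
        Finset.univ.image g := by
      intro s hs
      simp only [Finset.mem_filter, hμ'] at hs
      obtain ⟨i, -, hi⟩ := Finset.exists_ne_zero_of_sum_ne_zero hs.2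
      have : g i = s := by by_contra h; simp [h] at hi
      exact Finset.mem_image.2 ⟨i, Finset.mem_univ i, this⟩
    calc (Finset.univ.filter (fun s => μ' s ≠ 0)).card
        ≤ (Finset.univ.image g).card := Finset.card_le_card hsub
      _ ≤ Fintype.card ι := Finset.card_image_le.trans (Finset.card_le_univ _)
      _ ≤ Fintype.card H + 1 := hcard
  · intro h
    have hvh : v h = ∑ s, μ s * c s h := by
      simp [hv, Finset.sum_apply]
    have hvh' : v h = ∑ i : ι, w i * z i h := by
      rw [← hwz]; simp [Finset.sum_apply]
    have : ∑ s, μ' s * c s h = ∑ i : ι, w i * z i h := by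
      simp only [hμ', Finset.sum_mul]
      rw [Finset.sum_comm]
      refine Finset.sum_congr rfl fun i _ => ?_
      rw [Finset.sum_eq_single (g i)]
      · simp [hg i]
      · intro b _ hb; rw [if_neg (Ne.symm hb), zero_mul]
      · simp
    rw [← hvh, this, hvh']
end

section
/- Fix n ≥ 1, variables ordered x₁, y₁, …, x_n, y_n as positions 1,…,2n, and a Boolean predicate φ on assignments {1,…,2n} → {⊤,⊥}. Define the truth of the quantified formula ∃x₁∀y₁…∃x_n∀y_n φ recursively in the usual way. Then this quantified formula is true if and only if there exists a set P of assignments, all satisfying φ, that is minimal proof-shaped: each existential position has a unique continuation in P given any realized prefix, and each universal position has both continuations in P given any realized prefix. -/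
/-- Truth of the quantified formula `∃x₁ ∀y₁ … ∃x_n ∀y_n, φ`, consuming the quantifier
prefix from the front (positions are 0-based: `x_i` at index `2i-2`, `y_i` at `2i-1`). -/
def qbfTrue : (n : ℕ) → ((Fin (2 * n) → Bool) → Prop) → Prop
  | 0, φ => φ (fun i => Fin.elim0 i)
  | n + 1, φ => ∃ bx : Bool, ∀ byv : Bool,
      qbfTrue n (fun θ => φ (fun i =>
        if _h0 : i.val = 0 then bx
        else if _h1 : i.val = 1 then byv
        else θ ⟨i.val - 2, by have := i.isLt; omega⟩))

namespace QbfAux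

/-- Extend an assignment on `Fin (2*n)` by prepending values `bx, byv`. -/
def ext (n : ℕ) (bx byv : Bool) (θ : Fin (2 * n) → Bool) : Fin (2 * (n + 1)) → Bool :=
  fun i =>
    if _h0 : i.val = 0 then bx
    else if _h1 : i.val = 1 then byv
    else θ ⟨i.val - 2, by have := i.isLt; omega⟩

/-- Drop the first two values of an assignment. -/
def tl (n : ℕ) (θ : Fin (2 * (n + 1)) → Bool) : Fin (2 * n) → Bool :=
  fun j => θ ⟨j.val + 2, by have := j.isLt; omega⟩

def i0 (n : ℕ) : Fin (2 * (n + 1)) := ⟨0, by omega⟩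
def i1 (n : ℕ) : Fin (2 * (n + 1)) := ⟨1, by omega⟩

lemma ext_i0 (n : ℕ) (bx byv : Bool) (θ : Fin (2 * n) → Bool) :
    ext n bx byv θ (i0 n) = bx := rfl

lemma ext_i1 (n : ℕ) (bx byv : Bool) (θ : Fin (2 * n) → Bool) :
    ext n bx byv θ (i1 n) = byv := rfl

lemma ext_succ (n : ℕ) (bx byv : Bool) (θ : Fin (2 * n) → Bool)
    (i : Fin (2 * (n + 1))) (j : Fin (2 * n)) (h : i.val = j.val + 2) :
    ext n bx byv θ i = θ j := by
  have h0 : ¬ i.val = 0 := by omega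
  have h1 : ¬ i.val = 1 := by omega
  simp only [ext, dif_neg h0, dif_neg h1]
  congr 1
  exact Fin.ext (show i.val - 2 = j.val by omega)

lemma tl_apply (n : ℕ) (θ : Fin (2 * (n + 1)) → Bool) (j : Fin (2 * n)) :
    tl n θ j = θ ⟨j.val + 2, by have := j.isLt; omega⟩ := rfl

lemma ext_tl (n : ℕ) (bx byv : Bool) (θ : Fin (2 * (n + 1)) → Bool)
    (h0 : θ (i0 n) = bx) (h1 : θ (i1 n) = byv) :
    ext n bx byv (tl n θ) = θ := by
  funext i
  rcases Nat.lt_or_ge i.val 2 with h | h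
  · interval_cases hi : i.val
    · have : i = i0 n := Fin.ext hi
      rw [this, ext_i0, h0]
    · have : i = i1 n := Fin.ext hi
      rw [this, ext_i1, h1]
  · have hj : i.val - 2 < 2 * n := by have := i.isLt; omega
    rw [ext_succ n bx byv _ i ⟨i.val - 2, hj⟩ (by simp only [Fin.val_mk]; omega), tl_apply]
    congr 1
    exact Fin.ext (show i.val - 2 + 2 = i.val by omega)

lemma tl_ext (n : ℕ) (bx byv : Bool) (θ : Fin (2 * n) → Bool) :
    tl n (ext n bx byv θ) = θ := by
  funext j
  rw [tl_apply, ext_succ n bx byv θ _ j rfl]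

/-- The "minimal proof-shaped set" property. -/
def IsProof (n : ℕ) (φ : (Fin (2 * n) → Bool) → Prop)
    (P : Finset (Fin (2 * n) → Bool)) : Prop :=
  P.Nonempty ∧ (∀ θ ∈ P, φ θ) ∧
  (∀ θ ∈ P, ∀ k : Fin (2 * n), k.val % 2 = 0 →
    ∀ θ' ∈ P, (∀ j : Fin (2 * n), j < k → θ' j = θ j) → θ' k = θ k) ∧
  (∀ θ ∈ P, ∀ k : Fin (2 * n), k.val % 2 = 1 →
    ∃ θ' ∈ P, (∀ j : Fin (2 * n), j < k → θ' j = θ j) ∧ θ' k ≠ θ k)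

lemma main (n : ℕ) (φ : (Fin (2 * n) → Bool) → Prop) :
    qbfTrue n φ ↔ ∃ P, IsProof n φ P := by
  induction n with
  | zero =>
    constructor
    · intro h
      refine ⟨{fun i => Fin.elim0 i}, ⟨_, Finset.mem_singleton_self _⟩, ?_, ?_, ?_⟩
      · intro θ hθ
        rw [Finset.mem_singleton] at hθ
        rw [hθ]; exact h
      · intro θ _ k
        exact absurd k.isLt (by omega)
      · intro θ _ k
        exact absurd k.isLt (by omega)
    · rintro ⟨P, ⟨θ0, hθ0⟩, hφ, -, -⟩
      have : θ0 = (fun i => Fin.elim0 i) := by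
        funext i; exact absurd i.isLt (by omega)
      have h := hφ θ0 hθ0
      rwa [this] at h
  | succ n ih =>
    have hdef : qbfTrue (n + 1) φ =
        (∃ bx : Bool, ∀ byv : Bool, qbfTrue n (fun θ => φ (ext n bx byv θ))) := rfl
    rw [hdef]
    constructor
    · -- forward direction
      rintro ⟨bx, hbx⟩
      have hP : ∀ b : Bool, ∃ P, IsProof n (fun θ => φ (ext n bx b θ)) P :=
        fun b => (ih _).mp (hbx b)
      choose P hP using hP
      classical
      refine ⟨(P true).image (ext n bx true) ∪ (P false).image (ext n bx false),
        ?_, ?_, ?_, ?_⟩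
      · -- nonempty
        obtain ⟨τ, hτ⟩ := (hP true).1
        exact ⟨ext n bx true τ, Finset.mem_union_left _ (Finset.mem_image_of_mem _ hτ)⟩
      · -- all satisfy φ
        intro θ hθ
        rw [Finset.mem_union, Finset.mem_image, Finset.mem_image] at hθ
        rcases hθ with ⟨τ, hτ, rfl⟩ | ⟨τ, hτ, rfl⟩
        · exact (hP true).2.1 τ hτ
        · exact (hP false).2.1 τ hτ
      · -- existential uniqueness
        intro θ hθ k hk θ' hθ' hagree
        rw [Finset.mem_union, Finset.mem_image, Finset.mem_image] at hθ hθ'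
        obtain ⟨b, τ, hτ, rfl⟩ : ∃ b τ, τ ∈ P b ∧ θ = ext n bx b τ := by
          rcases hθ with ⟨τ, hτ, h⟩ | ⟨τ, hτ, h⟩
          exacts [⟨true, τ, hτ, h.symm⟩, ⟨false, τ, hτ, h.symm⟩]
        obtain ⟨b', τ', hτ', rfl⟩ : ∃ b' τ', τ' ∈ P b' ∧ θ' = ext n bx b' τ' := by
          rcases hθ' with ⟨τ, hτ, h⟩ | ⟨τ, hτ, h⟩
          exacts [⟨true, τ, hτ, h.symm⟩, ⟨false, τ, hτ, h.symm⟩]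
        rcases Nat.eq_zero_or_pos k.val with hk0 | hkpos
        · have hke : k = i0 n := Fin.ext hk0
          rw [hke, ext_i0, ext_i0]
        · have hk2 : 2 ≤ k.val := by omega
          -- positions 0 and 1 are below k; agreement at 1 forces b' = b
          have h1lt : i1 n < k := by
            rw [Fin.lt_def]; exact hk2
          have hbb : b' = b := by
            have := hagree (i1 n) h1lt
            rwa [ext_i1, ext_i1] at this
          subst hbb
          set m : Fin (2 * n) := ⟨k.val - 2, by have := k.isLt; omega⟩ with hm
          have hkm : k.val = m.val + 2 := by simp only [hm, Fin.val_mk]; omega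
          have hmeven : m.val % 2 = 0 := by simp only [hm, Fin.val_mk]; omega
          have hag : ∀ j : Fin (2 * n), j < m → τ' j = τ j := by
            intro j hj
            have hjlt : (⟨j.val + 2, by have := j.isLt; omega⟩ : Fin (2 * (n + 1))) < k := by
              rw [Fin.lt_def]; simp; rw [Fin.lt_def] at hj; omega
            have := hagree _ hjlt
            rwa [ext_succ n bx b' τ' _ j rfl, ext_succ n bx b' τ _ j rfl] at this
          have := (hP b').2.2.1 τ hτ m hmeven τ' hτ' hag
          rwa [ext_succ n bx b' τ' k m hkm, ext_succ n bx b' τ k m hkm]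
      · -- universal branching
        intro θ hθ k hk
        rw [Finset.mem_union, Finset.mem_image, Finset.mem_image] at hθ
        obtain ⟨b, τ, hτ, rfl⟩ : ∃ b τ, τ ∈ P b ∧ θ = ext n bx b τ := by
          rcases hθ with ⟨τ, hτ, h⟩ | ⟨τ, hτ, h⟩
          exacts [⟨true, τ, hτ, h.symm⟩, ⟨false, τ, hτ, h.symm⟩]
        rcases Nat.lt_or_ge k.val 2 with hklt | hk2
        · -- k = 1: switch the universal branch
          have hk1 : k.val = 1 := by omega
          have hke : k = i1 n := Fin.ext hk1
          obtain ⟨σ, hσ⟩ := (hP (!b)).1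
          refine ⟨ext n bx (!b) σ, ?_, ?_, ?_⟩
          · cases b
            · exact Finset.mem_union_left _ (Finset.mem_image_of_mem _ hσ)
            · exact Finset.mem_union_right _ (Finset.mem_image_of_mem _ hσ)
          · intro j hj
            rw [Fin.lt_def, hk1] at hj
            have : j = i0 n := Fin.ext (by simp only [i0, Fin.val_mk]; omega)
            rw [this, ext_i0, ext_i0]
          · rw [hke, ext_i1, ext_i1]
            simp
        · -- k ≥ 2: use the inner universal property
          set m : Fin (2 * n) := ⟨k.val - 2, by have := k.isLt; omega⟩ with hm
          have hkm : k.val = m.val + 2 := by simp only [hm, Fin.val_mk]; omega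
          have hmodd : m.val % 2 = 1 := by simp only [hm, Fin.val_mk]; omega
          obtain ⟨τ', hτ', hag, hne⟩ := (hP b).2.2.2 τ hτ m hmodd
          refine ⟨ext n bx b τ', ?_, ?_, ?_⟩
          · cases b
            · exact Finset.mem_union_right _ (Finset.mem_image_of_mem _ hτ')
            · exact Finset.mem_union_left _ (Finset.mem_image_of_mem _ hτ')
          · intro j hj
            rcases Nat.lt_or_ge j.val 2 with hjlt | hj2
            · interval_cases hji : j.val
              · have : j = i0 n := Fin.ext hji
                rw [this, ext_i0, ext_i0]
              · have : j = i1 n := Fin.ext hji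
                rw [this, ext_i1, ext_i1]
            · have hjj : j.val - 2 < 2 * n := by have := j.isLt; omega
              have hjm : (⟨j.val - 2, hjj⟩ : Fin (2 * n)) < m := by
                rw [Fin.lt_def] at hj ⊢; simp only [hm, Fin.val_mk] at *; omega
              rw [ext_succ n bx b τ' j ⟨j.val - 2, hjj⟩ (by simp only [Fin.val_mk]; omega),
                ext_succ n bx b τ j ⟨j.val - 2, hjj⟩ (by simp only [Fin.val_mk]; omega)]
              exact hag _ hjm
          · rw [ext_succ n bx b τ' k m hkm, ext_succ n bx b τ k m hkm]
            exact hne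
    · -- backward direction
      rintro ⟨Q, ⟨θ0, hθ0⟩, hQφ, hQe, hQu⟩
      classical
      set bx := θ0 (i0 n) with hbx
      -- all members of Q agree at position 0
      have hall0 : ∀ θ ∈ Q, θ (i0 n) = bx := by
        intro θ hθ
        exact hQe θ0 hθ0 (i0 n) (by simp [i0]) θ hθ
          (fun j hj => absurd hj (by rw [Fin.lt_def]; simp [i0]))
      -- for each b there is a member with value b at position 1
      have hex1 : ∀ b : Bool, ∃ θ ∈ Q, θ (i1 n) = b := by
        intro b
        by_cases hb : θ0 (i1 n) = b
        · exact ⟨θ0, hθ0, hb⟩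
        · obtain ⟨θ', hθ', -, hne⟩ := hQu θ0 hθ0 (i1 n) (by simp [i1])
          refine ⟨θ', hθ', ?_⟩
          revert hb hne
          cases b <;> cases θ0 (i1 n) <;> cases hθ'1 : θ' (i1 n) <;> simp
      refine ⟨bx, fun b => (ih _).mpr ?_⟩
      refine ⟨(Q.filter (fun θ => θ (i1 n) = b)).image (tl n), ?_, ?_, ?_, ?_⟩
      · -- nonempty
        obtain ⟨θ, hθ, hθ1⟩ := hex1 b
        exact ⟨tl n θ, Finset.mem_image_of_mem _ (Finset.mem_filter.mpr ⟨hθ, hθ1⟩)⟩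
      · -- satisfies restricted φ
        intro τ hτ
        rw [Finset.mem_image] at hτ
        obtain ⟨θ, hθ, rfl⟩ := hτ
        rw [Finset.mem_filter] at hθ
        rw [ext_tl n bx b θ (hall0 θ hθ.1) hθ.2]
        exact hQφ θ hθ.1
      · -- existential uniqueness
        intro τ hτ m hm τ' hτ' hag
        rw [Finset.mem_image] at hτ hτ'
        obtain ⟨θ, hθ, rfl⟩ := hτ
        obtain ⟨θ', hθ', rfl⟩ := hτ'
        rw [Finset.mem_filter] at hθ hθ'
        set k : Fin (2 * (n + 1)) := ⟨m.val + 2, by have := m.isLt; omega⟩ with hkdef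
        have hkeven : k.val % 2 = 0 := by simp [hkdef]; omega
        have hagk : ∀ j : Fin (2 * (n + 1)), j < k → θ' j = θ j := by
          intro j hj
          rcases Nat.lt_or_ge j.val 2 with hjlt | hj2
          · interval_cases hji : j.val
            · have : j = i0 n := Fin.ext hji
              rw [this, hall0 θ' hθ'.1, hall0 θ hθ.1]
            · have : j = i1 n := Fin.ext hji
              rw [this, hθ'.2, hθ.2]
          · have hjj : j.val - 2 < 2 * n := by have := j.isLt; omega
            have hjm : (⟨j.val - 2, hjj⟩ : Fin (2 * n)) < m := by
              rw [Fin.lt_def] at hj ⊢; simp only [hkdef, Fin.val_mk] at hj ⊢; omega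
            have := hag _ hjm
            rw [tl_apply, tl_apply] at this
            have hje : j = (⟨j.val - 2 + 2, by have := j.isLt; omega⟩ : Fin (2 * (n + 1))) :=
              Fin.ext (by simp only [Fin.val_mk]; omega)
            rw [hje]
            exact this
        have := hQe θ hθ.1 k hkeven θ' hθ'.1 hagk
        rw [tl_apply, tl_apply]
        exact this
      · -- universal branching
        intro τ hτ m hm
        rw [Finset.mem_image] at hτ
        obtain ⟨θ, hθ, rfl⟩ := hτ
        rw [Finset.mem_filter] at hθ
        set k : Fin (2 * (n + 1)) := ⟨m.val + 2, by have := m.isLt; omega⟩ with hkdef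
        have hkodd : k.val % 2 = 1 := by simp [hkdef]; omega
        obtain ⟨θ', hθ', hagk, hnek⟩ := hQu θ hθ.1 k hkodd
        have hθ'1 : θ' (i1 n) = b := by
          have h1lt : i1 n < k := by rw [Fin.lt_def]; simp [hkdef, i1]; exact Nat.lt_of_le_of_lt (Nat.mod_le _ _) (by omega)
          rw [hagk (i1 n) h1lt, hθ.2]
        refine ⟨tl n θ', Finset.mem_image_of_mem _
          (Finset.mem_filter.mpr ⟨hθ', hθ'1⟩), ?_, ?_⟩
        · intro j hj
          rw [tl_apply, tl_apply]
          refine hagk _ ?_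
          rw [Fin.lt_def] at hj ⊢
          simp [hkdef]; omega
        · rw [tl_apply, tl_apply]
          exact hnek

end QbfAux

/-- A QBF `∃x₁∀y₁…∃x_n∀y_n φ` is true iff it admits a minimal explicit proof: a set of
assignments satisfying `φ` in which every existential position has a unique continuation
given any realized prefix and every universal position has both continuations. -/
theorem qbf_true_iff_minimal_explicit_proof
    {n : ℕ} (hn : 1 ≤ n) (φ : (Fin (2 * n) → Bool) → Prop) :
    qbfTrue n φ ↔
      ∃ P : Finset (Fin (2 * n) → Bool),
        P.Nonempty ∧ (∀ θ ∈ P, φ θ) ∧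
        (∀ θ ∈ P, ∀ k : Fin (2 * n), k.val % 2 = 0 →
          ∀ θ' ∈ P, (∀ j : Fin (2 * n), j < k → θ' j = θ j) → θ' k = θ k) ∧
        (∀ θ ∈ P, ∀ k : Fin (2 * n), k.val % 2 = 1 →
          ∃ θ' ∈ P, (∀ j : Fin (2 * n), j < k → θ' j = θ j) ∧ θ' k ≠ θ k) := by
  exact QbfAux.main n φ
end
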